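/- The function f : ℝ → ℂ defined by f(t) = sin(πt) + sin(πt√2) is almost anti-periodic but is not periodic (there is no ω > 0 with f(t+ω) = f(t) for all t ∈ ℝ). -/

import Mathlib

/-- A set `S` of (positive) real numbers is relatively dense. -/
def RelativelyDense (S : Set ℝ) : Prop :=
  ∃ l > 0, ∀ a : ℝ, 0 ≤ a → ∃ τ ∈ S, a ≤ τ ∧ τ ≤ a + l

/-- `f : ℝ → X` is almost anti-periodic. -/
def AlmostAntiPeriodic {X : Type*} [NormedAddCommGroup X] (f : ℝ → X) : Prop :=
  ∀ ε > 0, RelativelyDense {τ : ℝ | 0 < τ ∧ ∀ t : ℝ, ‖f (t + τ) + f t‖ ≤ ε}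


lemma sin_lip (a b : ℝ) : |Real.sin a - Real.sin b| ≤ |a - b| := by
  rw [Real.sin_sub_sin]
  have h1 : |Real.sin ((a - b) / 2)| ≤ |(a - b) / 2| := Real.abs_sin_le_abs
  have h2 : |Real.cos ((a + b) / 2)| ≤ 1 := Real.abs_cos_le_one _
  have e : |2 * Real.sin ((a - b) / 2) * Real.cos ((a + b) / 2)|
      = 2 * |Real.sin ((a - b) / 2)| * |Real.cos ((a + b) / 2)| := by
    rw [abs_mul, abs_mul, abs_two]
  rw [e]
  have h3 : |(a - b) / 2| = |a - b| / 2 := by rw [abs_div, abs_two]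
  nlinarith [abs_nonneg (Real.sin ((a - b) / 2)), abs_nonneg (a - b)]


lemma exists_small {θ : ℝ} (hθ : Irrational θ) {η : ℝ} (hη : 0 < η) :
    ∃ q p : ℤ, q ≠ 0 ∧ 0 < q * θ - p ∧ q * θ - p ≤ η := by
  let S : AddSubgroup ℝ :=
    { carrier := {x | ∃ m n : ℤ, x = m + n * θ}
      add_mem' := by
        rintro x y ⟨m1, n1, rfl⟩ ⟨m2, n2, rfl⟩
        exact ⟨m1 + m2, n1 + n2, by push_cast; ring⟩
      zero_mem' := ⟨0, 0, by simp⟩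
      neg_mem' := by
        rintro x ⟨m, n, rfl⟩
        exact ⟨-m, -n, by push_cast; ring⟩ }
  rcases S.dense_or_cyclic with hd | ⟨g, hg⟩
  · have hne : (Set.Ioo (0:ℝ) (min η 1)).Nonempty :=
      Set.nonempty_Ioo.2 (lt_min hη one_pos)
    obtain ⟨x, hxS, hx⟩ := hd.exists_mem_open isOpen_Ioo hne
    obtain ⟨m, n, rfl⟩ := hxS
    have hx0 : (0:ℝ) < m + n * θ := hx.1
    have hx1 : (m:ℝ) + n * θ < min η 1 := hx.2
    have hn : n ≠ 0 := by
      rintro rfl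
      simp only [Int.cast_zero, zero_mul, add_zero] at hx0 hx1
      have hm0 : 0 < m := by exact_mod_cast hx0
      have hm1 : (m:ℝ) < 1 := lt_of_lt_of_le hx1 (min_le_right _ _)
      have : m < 1 := by exact_mod_cast hm1
      omega
    refine ⟨n, -m, hn, ?_, ?_⟩
    · push_cast; linarith
    · push_cast
      have := lt_of_lt_of_le hx1 (min_le_left _ _)
      linarith
  · exfalso
    have h1 : (1:ℝ) ∈ S := ⟨1, 0, by simp⟩
    have h2 : θ ∈ S := ⟨0, 1, by simp⟩
    rw [hg] at h1 h2
    rw [AddSubgroup.mem_closure_singleton] at h1 h2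
    obtain ⟨n, hn⟩ := h1
    obtain ⟨m, hm⟩ := h2
    rw [zsmul_eq_mul] at hn hm
    have hn0 : (n:ℝ) ≠ 0 := by
      intro h; rw [h, zero_mul] at hn; exact one_ne_zero hn.symm
    have hg0 : g ≠ 0 := by
      intro h; rw [h, mul_zero] at hn; exact one_ne_zero hn.symm
    apply hθ
    refine ⟨(m : ℚ) / (n : ℚ), ?_⟩
    push_cast
    rw [div_eq_iff hn0, ← hm, mul_assoc, mul_comm g, hn, mul_one]


lemma step_hit (x₀ : ℝ) {β η : ℝ} (hβ : 0 < β) (hβη : β ≤ η) :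
    ∃ k : ℕ, k ≤ Nat.ceil (1 / β) ∧ ∃ m : ℤ, |x₀ + k * β - m| ≤ η := by
  classical
  set K := Nat.ceil (1 / β) with hK
  have hK1 : (1 : ℝ) ≤ K * β := by
    have := Nat.le_ceil (1 / β)
    rw [div_le_iff₀ hβ] at this
    simpa [hK] using this
  have hceil : (⌈x₀⌉ : ℝ) ≤ x₀ + K * β := by
    have := Int.ceil_lt_add_one x₀
    linarith
  have hex : ∃ k : ℕ, (⌈x₀⌉ : ℝ) ≤ x₀ + k * β := ⟨K, hceil⟩
  set k := Nat.find hex with hkdef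
  have hks : (⌈x₀⌉ : ℝ) ≤ x₀ + k * β := Nat.find_spec hex
  have hkK : k ≤ K := Nat.find_le hceil
  refine ⟨k, hkK, ⌈x₀⌉, ?_⟩
  rcases Nat.eq_zero_or_pos k with h0 | hpos
  · rw [h0] at hks
    have hle : x₀ ≤ (⌈x₀⌉ : ℝ) := Int.le_ceil x₀
    push_cast at hks ⊢
    rw [h0]
    push_cast
    rw [abs_le]
    constructor <;> linarith
  · have hprev : ¬ ((⌈x₀⌉ : ℝ) ≤ x₀ + (k - 1 : ℕ) * β) :=
      Nat.find_min hex (by omega)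
    push_neg at hprev
    have hcast : ((k - 1 : ℕ) : ℝ) = (k : ℝ) - 1 := by
      have : (1:ℕ) ≤ k := hpos
      push_cast [Nat.cast_sub this]
      ring
    rw [hcast] at hprev
    rw [abs_le]
    constructor <;> nlinarith

lemma syndetic {θ : ℝ} (hθ : Irrational θ) (c : ℝ) {η : ℝ} (hη : 0 < η) :
    ∃ L : ℕ, ∀ j1 : ℤ, ∃ j : ℤ, j1 ≤ j ∧ j ≤ j1 + L ∧ ∃ r : ℤ, |j * θ + c - r| ≤ η := by
  obtain ⟨q, p, hq, hβ0, hβη⟩ := exists_small hθ hη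
  set β := (q : ℝ) * θ - p with hβ
  set K := Nat.ceil (1 / β) with hKdef
  refine ⟨K * q.natAbs, fun j1 => ?_⟩
  -- base point
  set jb : ℤ := if 0 < q then j1 else j1 + K * q.natAbs with hjb
  obtain ⟨k, hkK, m, hm⟩ := step_hit ((jb : ℝ) * θ + c) hβ0 hβη
  refine ⟨jb + k * q, ?_, ?_, m + k * p, ?_⟩
  · -- j1 ≤ jb + k*q
    rcases lt_or_ge 0 q with hq' | hq'
    · have : (0:ℤ) ≤ k * q := mul_nonneg (Int.ofNat_nonneg k) hq'.le
      simp only [hjb, if_pos hq']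
      omega
    · have hqneg : q < 0 := lt_of_le_of_ne hq' hq
      have habs : (q.natAbs : ℤ) = -q := Int.ofNat_natAbs_of_nonpos hq'
      have : (k : ℤ) * q ≥ (K : ℤ) * q := by
        apply mul_le_mul_of_nonpos_right _ hq'
        exact_mod_cast hkK
      simp only [hjb, if_neg (not_lt.mpr hq')]
      have h2 : (K : ℤ) * (q.natAbs : ℤ) = -((K:ℤ) * q) := by rw [habs]; ring
      push_cast at h2 ⊢
      omega
  · -- jb + k*q ≤ j1 + K*|q|
    rcases lt_or_ge 0 q with hq' | hq'
    · have habs : (q.natAbs : ℤ) = q := Int.natAbs_of_nonneg hq'.le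
      have : (k : ℤ) * q ≤ (K : ℤ) * q := by
        apply mul_le_mul_of_nonneg_right _ hq'.le
        exact_mod_cast hkK
      simp only [hjb, if_pos hq']
      push_cast [habs] at *
      omega
    · have : (k:ℤ) * q ≤ 0 := mul_nonpos_of_nonneg_of_nonpos (Int.ofNat_nonneg k) hq'
      simp only [hjb, if_neg (not_lt.mpr hq')]
      omega
  · -- the approximation
    have key : ((jb + k * q : ℤ) : ℝ) * θ + c - ((m + k * p : ℤ) : ℝ)
        = (jb : ℝ) * θ + c + k * β - m := by
      push_cast
      rw [hβ]
      ring
    rw [key]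
    exact hm

/-- The function `t ↦ sin (π t) + sin (π t √2)` is almost anti-periodic but not periodic. -/
theorem sin_add_sin_sqrt_two_almostAntiPeriodic_not_periodic :
    AlmostAntiPeriodic (fun t : ℝ =>
      ((Real.sin (Real.pi * t) + Real.sin (Real.pi * t * Real.sqrt 2) : ℝ) : ℂ)) ∧
    ¬ ∃ ω : ℝ, 0 < ω ∧ ∀ t : ℝ,
      ((Real.sin (Real.pi * (t + ω)) + Real.sin (Real.pi * (t + ω) * Real.sqrt 2) : ℝ) : ℂ) =
      ((Real.sin (Real.pi * t) + Real.sin (Real.pi * t * Real.sqrt 2) : ℝ) : ℂ) := by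
  have hπ : (0:ℝ) < Real.pi := Real.pi_pos
  constructor
  · -- almost anti-periodic
    intro ε hε
    set η := ε / (2 * Real.pi) with hηdef
    have hη : 0 < η := by positivity
    have hirr : Irrational (Real.sqrt 2 - 1) := by
      simpa using irrational_sqrt_two.sub_intCast 1
    obtain ⟨L, hL⟩ := syndetic hirr ((Real.sqrt 2 - 1) / 2) hη
    refine ⟨2 * L + 3, by positivity, fun a ha => ?_⟩
    obtain ⟨j, hj1, hj2, r, hr⟩ := hL ⌈a / 2⌉
    set τ : ℝ := ((2 * j + 1 : ℤ) : ℝ) with hτdef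
    have hcj1 : (a / 2 : ℝ) ≤ (⌈a / 2⌉ : ℤ) := Int.le_ceil _
    have hcj2 : ((⌈a / 2⌉ : ℤ) : ℝ) < a / 2 + 1 := Int.ceil_lt_add_one _
    have hjR1 : ((⌈a / 2⌉ : ℤ) : ℝ) ≤ (j : ℝ) := by exact_mod_cast hj1
    have hjR2 : (j : ℝ) ≤ ((⌈a / 2⌉ : ℤ) : ℝ) + L := by exact_mod_cast hj2
    have hτa : a + 1 ≤ τ := by rw [hτdef]; push_cast; linarith
    have hτb : τ ≤ a + (2 * L + 3) := by rw [hτdef]; push_cast; linarith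
    set δ : ℝ := 2 * ((j : ℝ) * (Real.sqrt 2 - 1) + (Real.sqrt 2 - 1) / 2 - r)
      with hδdef
    have hδ : |δ| ≤ 2 * η := by
      rw [hδdef, abs_mul, abs_two]
      linarith [hr]
    have e1 : ∀ t : ℝ, Real.sin (Real.pi * (t + τ)) = -Real.sin (Real.pi * t) := by
      intro t
      have harg : Real.pi * (t + τ) = (Real.pi * t + Real.pi) + j * (2 * Real.pi) := by
        rw [hτdef]; push_cast; ring
      rw [harg, Real.sin_add_int_mul_two_pi, Real.sin_add_pi]
    have e2 : ∀ t : ℝ, Real.sin (Real.pi * (t + τ) * Real.sqrt 2)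
        = -Real.sin (Real.pi * t * Real.sqrt 2 + Real.pi * δ) := by
      intro t
      have harg : Real.pi * (t + τ) * Real.sqrt 2
          = ((Real.pi * t * Real.sqrt 2 + Real.pi * δ) + Real.pi)
            + (j + r : ℤ) * (2 * Real.pi) := by
        rw [hτdef, hδdef]; push_cast; ring
      rw [harg, Real.sin_add_int_mul_two_pi, Real.sin_add_pi]
    refine ⟨τ, ⟨by linarith, fun t => ?_⟩, by linarith, hτb⟩
    have hsum : Real.sin (Real.pi * (t + τ)) + Real.sin (Real.pi * (t + τ) * Real.sqrt 2)
        + (Real.sin (Real.pi * t) + Real.sin (Real.pi * t * Real.sqrt 2))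
        = Real.sin (Real.pi * t * Real.sqrt 2)
          - Real.sin (Real.pi * t * Real.sqrt 2 + Real.pi * δ) := by
      rw [e1 t, e2 t]; ring
    calc ‖((Real.sin (Real.pi * (t + τ)) + Real.sin (Real.pi * (t + τ) * Real.sqrt 2) : ℝ) : ℂ)
          + ((Real.sin (Real.pi * t) + Real.sin (Real.pi * t * Real.sqrt 2) : ℝ) : ℂ)‖
        = |Real.sin (Real.pi * (t + τ)) + Real.sin (Real.pi * (t + τ) * Real.sqrt 2)
          + (Real.sin (Real.pi * t) + Real.sin (Real.pi * t * Real.sqrt 2))| := by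
          rw [← Complex.ofReal_add, Complex.norm_real, Real.norm_eq_abs]
      _ = |Real.sin (Real.pi * t * Real.sqrt 2)
            - Real.sin (Real.pi * t * Real.sqrt 2 + Real.pi * δ)| := by rw [hsum]
      _ ≤ |Real.pi * t * Real.sqrt 2 - (Real.pi * t * Real.sqrt 2 + Real.pi * δ)| :=
          sin_lip _ _
      _ = Real.pi * |δ| := by
          rw [show Real.pi * t * Real.sqrt 2 - (Real.pi * t * Real.sqrt 2 + Real.pi * δ)
            = -(Real.pi * δ) by ring, abs_neg, abs_mul, abs_of_pos hπ]
      _ ≤ Real.pi * (2 * η) := by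
          have := hδ
          nlinarith
      _ = ε := by rw [hηdef]; field_simp
  · -- not periodic
    rintro ⟨ω, hω, H⟩
    have Hr : ∀ t : ℝ, Real.sin (Real.pi * (t + ω)) + Real.sin (Real.pi * (t + ω) * Real.sqrt 2)
        = Real.sin (Real.pi * t) + Real.sin (Real.pi * t * Real.sqrt 2) := fun t => by
      exact_mod_cast H t
    have h1 := Hr (-(ω / 2))
    have r2 : Real.pi * (-(ω / 2) + ω) * Real.sqrt 2
        = Real.pi * (ω / 2) * Real.sqrt 2 := by ring
    have r1 : Real.pi * (-(ω / 2) + ω) = Real.pi * (ω / 2) := by ring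
    have r4 : Real.pi * (-(ω / 2)) * Real.sqrt 2
        = -(Real.pi * (ω / 2) * Real.sqrt 2) := by ring
    have r3 : Real.pi * (-(ω / 2)) = -(Real.pi * (ω / 2)) := by ring
    rw [r2, r1, r4, r3, Real.sin_neg, Real.sin_neg] at h1
    have e1 : Real.sin (Real.pi * (ω / 2)) + Real.sin (Real.pi * (ω / 2) * Real.sqrt 2) = 0 := by
      linarith
    have h2 := Hr (1 - ω / 2)
    have q2 : Real.pi * (1 - ω / 2 + ω) * Real.sqrt 2
        = Real.pi * (ω / 2) * Real.sqrt 2 + Real.pi * Real.sqrt 2 := by ring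
    have q1 : Real.pi * (1 - ω / 2 + ω) = Real.pi * (ω / 2) + Real.pi := by ring
    have q4 : Real.pi * (1 - ω / 2) * Real.sqrt 2
        = Real.pi * Real.sqrt 2 - Real.pi * (ω / 2) * Real.sqrt 2 := by ring
    have q3 : Real.pi * (1 - ω / 2) = Real.pi - Real.pi * (ω / 2) := by ring
    rw [q2, q1, q4, q3, Real.sin_add_pi, Real.sin_pi_sub, Real.sin_add, Real.sin_sub] at h2
    have hs2z : Real.sin (Real.pi * (ω / 2) * Real.sqrt 2)
        * (Real.cos (Real.pi * Real.sqrt 2) + 1) = 0 := by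
      linear_combination h2 / 2 + e1
    have hφne : Real.cos (Real.pi * Real.sqrt 2) ≠ -1 := by
      intro hc
      rw [Real.cos_eq_neg_one_iff] at hc
      obtain ⟨k, hk⟩ := hc
      apply irrational_sqrt_two.ne_int (2 * k + 1)
      have hpk : Real.pi * Real.sqrt 2 = Real.pi * ((2 * k + 1 : ℤ) : ℝ) := by
        push_cast at hk ⊢; linarith
      exact mul_left_cancel₀ (ne_of_gt hπ) hpk
    have hs2zero : Real.sin (Real.pi * (ω / 2) * Real.sqrt 2) = 0 := by
      rcases mul_eq_zero.mp hs2z with h | h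
      · exact h
      · exact absurd (by linarith : Real.cos (Real.pi * Real.sqrt 2) = -1) hφne
    have hs1zero : Real.sin (Real.pi * (ω / 2)) = 0 := by linarith
    rw [Real.sin_eq_zero_iff] at hs1zero hs2zero
    obtain ⟨n, hn⟩ := hs1zero
    obtain ⟨k, hk⟩ := hs2zero
    have hωn : ω = 2 * n := by
      have h := mul_left_cancel₀ (ne_of_gt hπ)
        (show Real.pi * (n : ℝ) = Real.pi * (ω / 2) by linarith [hn])
      linarith
    have hn0 : (n : ℝ) ≠ 0 := by
      intro h; rw [h] at hωn; norm_num at hωn; linarith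
    have hk2 : (n : ℝ) * Real.sqrt 2 = k := by
      apply mul_left_cancel₀ (ne_of_gt hπ)
      rw [hωn] at hk
      linear_combination -hk
    apply irrational_sqrt_two
    refine ⟨(k : ℚ) / (n : ℚ), ?_⟩
    push_cast
    rw [div_eq_iff hn0]
    linarith [hk2]
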